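/- An R-module M has only finitely many small submodules if and only if Rad(M) has only finitely many submodules. -/

import Mathlib

/-- A submodule `N` of `M` is small (superfluous): `N + A = M` implies `A = M`. -/
def IsSmallSubmodule {R M : Type*} [Ring R] [AddCommGroup M] [Module R M]
    (N : Submodule R M) : Prop :=
  ∀ A : Submodule R M, N ⊔ A = ⊤ → A = ⊤

/-- `M` is an fs-module: it has only finitely many small submodules. -/
def IsFsModule (R M : Type*) [Ring R] [AddCommGroup M] [Module R M] : Prop :=
  {N : Submodule R M | IsSmallSubmodule N}.Finite

/-- The radical of `M`, as the sum of all small submodules of `M`. -/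
def modRad (R M : Type*) [Ring R] [AddCommGroup M] [Module R M] : Submodule R M :=
  sSup {N : Submodule R M | IsSmallSubmodule N}

/-- The radical of `M`, as the intersection of all maximal submodules of `M`. -/
def modRad' (R M : Type*) [Ring R] [AddCommGroup M] [Module R M] : Submodule R M :=
  sInf {N : Submodule R M | IsCoatom N}

/-- The socle of `M`: the sum of all minimal (simple) submodules of `M`. -/
def modSoc (R M : Type*) [Ring R] [AddCommGroup M] [Module R M] : Submodule R M :=
  sSup {N : Submodule R M | IsAtom N}

/-- `M` has finite hollow dimension: for every descending chain `N₁ ⊇ N₂ ⊇ ⋯`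
there is `n` such that `Nₙ / N_k` is small in `M / N_k` for all `k ≥ n`. -/
def HasFiniteHollowDim (R M : Type*) [Ring R] [AddCommGroup M] [Module R M] : Prop :=
  ∀ N : ℕ → Submodule R M, (∀ i j, i ≤ j → N j ≤ N i) →
    ∃ n, ∀ k, n ≤ k → IsSmallSubmodule (Submodule.map (N k).mkQ (N n))

/-- `M` has finite Goldie dimension: it contains no infinite direct sum of
nonzero submodules. -/
def HasFiniteGoldieDim (R M : Type*) [Ring R] [AddCommGroup M] [Module R M] : Prop :=
  ¬ ∃ f : ℕ → Submodule R M, (∀ i, f i ≠ ⊥) ∧ iSupIndep f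


lemma small_of_le {R M : Type*} [Ring R] [AddCommGroup M] [Module R M]
    {N N' : Submodule R M} (h : N ≤ N') (hN' : IsSmallSubmodule N') :
    IsSmallSubmodule N := by
  intro A hA
  exact hN' A (top_le_iff.mp (hA ▸ sup_le_sup_right h A))

lemma small_sup {R M : Type*} [Ring R] [AddCommGroup M] [Module R M]
    {N N' : Submodule R M} (hN : IsSmallSubmodule N) (hN' : IsSmallSubmodule N') :
    IsSmallSubmodule (N ⊔ N') := by
  intro A hA
  exact hN' A (hN (N' ⊔ A) (by rw [← sup_assoc]; exact hA))

lemma small_sSup_of_finite {R M : Type*} [Ring R] [AddCommGroup M] [Module R M]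
    {S : Set (Submodule R M)} (hS : S.Finite) (h : ∀ N ∈ S, IsSmallSubmodule N) :
    IsSmallSubmodule (sSup S) := by
  revert h
  refine Set.Finite.induction_on (motive := fun S _ => (∀ N ∈ S, IsSmallSubmodule N) → IsSmallSubmodule (sSup S)) S hS ?_ ?_
  · intro _
    intro A hA
    simpa using hA
  · intro a s _ _ ih h
    rw [sSup_insert]
    exact small_sup (h _ (Set.mem_insert _ _))
      (ih fun N hN => h N (Set.mem_insert_of_mem _ hN))

theorem fs_iff_rad_finitely_many_submodules (R M : Type*) [Ring R] [AddCommGroup M]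
    [Module R M] :
    IsFsModule R M ↔ {N : Submodule R M | N ≤ modRad R M}.Finite := by
  constructor
  · intro hfs
    have hrad : IsSmallSubmodule (modRad R M) :=
      small_sSup_of_finite hfs fun N hN => hN
    exact hfs.subset fun N hN => small_of_le hN hrad
  · intro hfin
    exact hfin.subset fun N hN => le_sSup hN
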